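/- arXiv:1606.05380 — 2 statements merged into one kernel-verified Lean document; each statement's English description precedes it below -/
import Mathlib

section
/- Let Q be a non-singular quadric in PG(n,2) of projective index g ≥ 1 with point-graph Γ, and let Γ_0 be the switched graph built from a single point P of Q (the case s = 0). Then the map φ fixing P and all points R with ⟨P,R⟩ ⊄ Q, and sending each point Q' ≠ P with line PQ' ⊂ Q to the third point of Q on the line PQ', is a graph isomorphism from Γ to Γ_0. -/
section Defs

variable {K V : Type*} [Field K] [AddCommGroup V] [Module K V]

/-- A submodule is totally singular for `Q` if `Q` vanishes on it
(i.e. the corresponding projective subspace is contained in the quadric). -/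
def totallySingular (Q : QuadraticForm K V) (W : Submodule K V) : Prop :=
  ∀ v ∈ W, Q v = 0

/-- The quadric defined by `Q` is non-singular: no nonzero singular vector lies
in the radical of the polar form. -/
def quadricNonsingular (Q : QuadraticForm K V) : Prop :=
  ∀ v : V, v ≠ 0 → Q v = 0 → ∃ w : V, QuadraticMap.polar ⇑Q v w ≠ 0

/-- The quadric of `Q` has projective index `g`: it contains a projective subspace of
dimension `g` and none of larger dimension. -/
def projIndex (Q : QuadraticForm K V) (g : ℕ) : Prop :=
  (∃ W : Submodule K V, totallySingular Q W ∧ Module.finrank K W = g + 1) ∧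
  ∀ W : Submodule K V, totallySingular Q W → Module.finrank K W ≤ g + 1

/-- A generator: a `g`-dimensional projective subspace contained in the quadric. -/
def isGenerator (Q : QuadraticForm K V) (g : ℕ) (W : Submodule K V) : Prop :=
  totallySingular Q W ∧ Module.finrank K W = g + 1

/-- The points of the quadric, as projective points. -/
abbrev QuadricPoint (Q : QuadraticForm K V) :=
  {p : Projectivization K V // Q p.rep = 0}

/-- The point-graph of the quadric: two points are adjacent when the line joining them
is contained in the quadric. -/
def pointGraph (Q : QuadraticForm K V) : SimpleGraph (QuadricPoint Q) where
  Adj p q := p ≠ q ∧ totallySingular Q (p.1.submodule ⊔ q.1.submodule)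
  symm := by
    constructor
    rintro p q ⟨h1, h2⟩
    exact ⟨h1.symm, by rwa [sup_comm]⟩
  loopless := by constructor; rintro p ⟨h1, -⟩; exact h1 rfl

/-- Type (ii) points relative to `α`: points outside `α` lying in an
`(s+1)`-space of the quadric through `α`. -/
def typeII (Q : QuadraticForm K V) (α : Submodule K V) (p : QuadricPoint Q) : Prop :=
  p.1.rep ∉ α ∧ totallySingular Q (α ⊔ p.1.submodule)

/-- Type (iii) points relative to `α`: the remaining points outside `α`. -/
def typeIII (Q : QuadraticForm K V) (α : Submodule K V) (p : QuadricPoint Q) : Prop :=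
  p.1.rep ∉ α ∧ ¬ totallySingular Q (α ⊔ p.1.submodule)

/-- A pair of points, one of type (ii), the other of type (iii). -/
def mixedPair (Q : QuadraticForm K V) (α : Submodule K V) (p q : QuadricPoint Q) : Prop :=
  (typeII Q α p ∧ typeIII Q α q) ∨ (typeII Q α q ∧ typeIII Q α p)

lemma mixedPair_comm (Q : QuadraticForm K V) (α : Submodule K V) (p q : QuadricPoint Q) :
    mixedPair Q α p q ↔ mixedPair Q α q p := by
  unfold mixedPair; exact or_comm

/-- The line joining `p` and `q` is a 2-secant: it meets the quadric in exactly two points. -/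
def secant2 (Q : QuadraticForm K V) (p q : QuadricPoint Q) : Prop :=
  {x : Projectivization K V | x.rep ∈ p.1.submodule ⊔ q.1.submodule ∧ Q x.rep = 0}.ncard = 2

lemma secant2_comm (Q : QuadraticForm K V) (p q : QuadricPoint Q) :
    secant2 Q p q ↔ secant2 Q q p := by
  unfold secant2; rw [sup_comm]

/-- The switched graph `Γ_s`: same as the point-graph, except that a type (ii) point and a
type (iii) point are adjacent iff their joining line is a 2-secant of the quadric. -/
def gammaS (Q : QuadraticForm K V) (α : Submodule K V) : SimpleGraph (QuadricPoint Q) where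
  Adj p q := p ≠ q ∧ (mixedPair Q α p q → secant2 Q p q) ∧
    (¬ mixedPair Q α p q → totallySingular Q (p.1.submodule ⊔ q.1.submodule))
  symm := by
    constructor
    rintro p q ⟨h1, h2, h3⟩
    refine ⟨h1.symm, fun h => (secant2_comm Q p q).mp (h2 ((mixedPair_comm Q α q p).mp h)),
      fun h => ?_⟩
    have := h3 (fun hx => h ((mixedPair_comm Q α p q).mp hx))
    rwa [sup_comm]
  loopless := by constructor; rintro p ⟨h1, -⟩; exact h1 rfl

/-- `v` has exactly half of the vertices of `X` as neighbours. -/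
def halfIn {Ω : Type*} (G : SimpleGraph Ω) (X : Set Ω) (v : Ω) : Prop :=
  2 * (X ∩ G.neighborSet v).ncard = X.ncard

/-- The Godsil–McKay switch of `G` with respect to the part `X`: every vertex outside `X`
having exactly half of `X` as neighbours has its edges to `X` complemented. -/
def gmSwitch {Ω : Type*} (G : SimpleGraph Ω) (X : Set Ω) : SimpleGraph Ω where
  Adj v w :=
    (((v ∈ X ∧ w ∉ X ∧ halfIn G X w) ∨ (w ∈ X ∧ v ∉ X ∧ halfIn G X v)) ∧
        ¬ G.Adj v w ∧ v ≠ w) ∨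
    (¬ ((v ∈ X ∧ w ∉ X ∧ halfIn G X w) ∨ (w ∈ X ∧ v ∉ X ∧ halfIn G X v)) ∧ G.Adj v w)
  symm := by
    constructor
    rintro v w (⟨h1, h2, h3⟩ | ⟨h1, h2⟩)
    · exact Or.inl ⟨h1.symm, fun h => h2 h.symm, h3.symm⟩
    · exact Or.inr ⟨fun h => h1 h.symm, h2.symm⟩
  loopless := by
    constructor
    rintro v (⟨h1, h2, h3⟩ | ⟨h1, h2⟩)
    · exact h3 rfl
    · exact G.loopless.irrefl v h2

noncomputable instance {K V : Type*} [Field K] [AddCommGroup V] [Module K V] [Finite V]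
    (Q : QuadraticForm K V) : Fintype (QuadricPoint Q) := by
  have : Finite (Projectivization K V) := Quotient.finite _
  exact Fintype.ofFinite _

end Defs

section Aux

open QuadraticMap

variable {V : Type*} [AddCommGroup V] [Module (ZMod 2) V]

lemma zmod2_unit_coe (a : (ZMod 2)ˣ) : (a : ZMod 2) = 1 := by
  have h : ∀ x : ZMod 2, x ≠ 0 → x = 1 := by decide
  exact h _ a.ne_zero

lemma rep_mk_zmod2 (v : V) (hv : v ≠ 0) : (Projectivization.mk (ZMod 2) v hv).rep = v := by
  have h := Projectivization.mk_rep (Projectivization.mk (ZMod 2) v hv)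
  rw [Projectivization.mk_eq_mk_iff] at h
  obtain ⟨a, ha⟩ := h
  rw [Units.smul_def, zmod2_unit_coe, one_smul] at ha
  exact ha.symm

lemma rep_eq_iff_zmod2 (x y : Projectivization (ZMod 2) V) : x = y ↔ x.rep = y.rep := by
  refine ⟨fun h => h ▸ rfl, fun h => ?_⟩
  rw [← Projectivization.mk_rep x, ← Projectivization.mk_rep y]
  simp_rw [h]

lemma add_self_zmod2 (x : V) : x + x = 0 := by
  rw [← two_smul (ZMod 2) x, show (2 : ZMod 2) = 0 from rfl, zero_smul]

lemma add_eq_zero_iff_zmod2 (x y : V) : x + y = 0 ↔ x = y := by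
  constructor
  · intro h
    have : x + (y + y) = (x + y) + y := by rw [add_assoc]
    rw [add_self_zmod2, add_zero, h, zero_add] at this
    exact this
  · rintro rfl; exact add_self_zmod2 x

lemma mem_span_pair_zmod2 {u w x : V} :
    x ∈ Submodule.span (ZMod 2) {u, w} ↔ x = 0 ∨ x = u ∨ x = w ∨ x = u + w := by
  rw [Submodule.mem_span_pair]
  constructor
  · rintro ⟨a, b, rfl⟩
    have h : ∀ c : ZMod 2, c = 0 ∨ c = 1 := by decide
    rcases h a with rfl | rfl <;> rcases h b with rfl | rfl <;> simp
  · rintro (rfl | rfl | rfl | rfl)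
    exacts [⟨0, 0, by simp⟩, ⟨1, 0, by simp⟩, ⟨0, 1, by simp⟩, ⟨1, 1, by simp⟩]

lemma mem_span_singleton_zmod2 {u x : V} :
    x ∈ Submodule.span (ZMod 2) {u} ↔ x = 0 ∨ x = u := by
  rw [Submodule.mem_span_singleton]
  constructor
  · rintro ⟨a, rfl⟩
    have h : ∀ c : ZMod 2, c = 0 ∨ c = 1 := by decide
    rcases h a with rfl | rfl <;> simp
  · rintro (rfl | rfl)
    exacts [⟨0, by simp⟩, ⟨1, by simp⟩]

variable (Q : QuadraticForm (ZMod 2) V)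

lemma polar_self_zmod2 (x : V) : QuadraticMap.polar ⇑Q x x = 0 := by
  rw [QuadraticMap.polar_self]
  have h : ∀ y : ZMod 2, 2 • y = 0 := by decide
  exact h _

lemma qp_eq_iff (v w : QuadricPoint Q) : v = w ↔ v.1.rep = w.1.rep :=
  ⟨fun h => h ▸ rfl, fun h => Subtype.ext ((rep_eq_iff_zmod2 _ _).mpr h)⟩

lemma line_sub (p q : QuadricPoint Q) :
    p.1.submodule ⊔ q.1.submodule = Submodule.span (ZMod 2) {p.1.rep, q.1.rep} := by
  rw [Projectivization.submodule_eq, Projectivization.submodule_eq, ← Submodule.span_union,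
    Set.singleton_union]

lemma line_ts_iff (p q : QuadricPoint Q) :
    totallySingular Q (p.1.submodule ⊔ q.1.submodule) ↔
      QuadraticMap.polar ⇑Q p.1.rep q.1.rep = 0 := by
  rw [line_sub]
  constructor
  · intro h
    have hm : p.1.rep + q.1.rep ∈ Submodule.span (ZMod 2) {p.1.rep, q.1.rep} :=
      mem_span_pair_zmod2.mpr (Or.inr (Or.inr (Or.inr rfl)))
    have h2 := h _ hm
    rw [QuadraticMap.map_add ⇑Q, p.2, q.2, zero_add, zero_add] at h2
    exact h2
  · intro h v hv
    rcases mem_span_pair_zmod2.mp hv with rfl | rfl | rfl | rfl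
    · exact QuadraticMap.map_zero Q
    · exact p.2
    · exact q.2
    · rw [QuadraticMap.map_add ⇑Q, p.2, q.2, h]; simp

lemma secant2_iff (p q : QuadricPoint Q) (hpq : p ≠ q) :
    secant2 Q p q ↔ QuadraticMap.polar ⇑Q p.1.rep q.1.rep ≠ 0 := by
  have hu : p.1.rep ≠ 0 := p.1.rep_nonzero
  have hw : q.1.rep ≠ 0 := q.1.rep_nonzero
  have huw : p.1.rep ≠ q.1.rep := fun h => hpq ((qp_eq_iff Q p q).mpr h)
  have hQsum : Q (p.1.rep + q.1.rep) = QuadraticMap.polar ⇑Q p.1.rep q.1.rep := by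
    rw [QuadraticMap.map_add ⇑Q, p.2, q.2, zero_add, zero_add]
  have hsum0 : p.1.rep + q.1.rep ≠ 0 := fun h => huw ((add_eq_zero_iff_zmod2 _ _).mp h)
  have hmem : ∀ x : Projectivization (ZMod 2) V,
      (x.rep ∈ p.1.submodule ⊔ q.1.submodule ∧ Q x.rep = 0) ↔
      (x = p.1 ∨ x = q.1 ∨ (x.rep = p.1.rep + q.1.rep ∧
        QuadraticMap.polar ⇑Q p.1.rep q.1.rep = 0)) := by
    intro x
    rw [line_sub, mem_span_pair_zmod2]
    constructor
    · rintro ⟨(h0 | h | h | h), hQx⟩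
      · exact absurd h0 x.rep_nonzero
      · exact Or.inl ((rep_eq_iff_zmod2 _ _).mpr h)
      · exact Or.inr (Or.inl ((rep_eq_iff_zmod2 _ _).mpr h))
      · refine Or.inr (Or.inr ⟨h, ?_⟩)
        rw [← hQsum, ← h]; exact hQx
    · rintro (rfl | rfl | ⟨h, hp0⟩)
      · exact ⟨Or.inr (Or.inl rfl), p.2⟩
      · exact ⟨Or.inr (Or.inr (Or.inl rfl)), q.2⟩
      · exact ⟨Or.inr (Or.inr (Or.inr h)), by rw [h, hQsum]; exact hp0⟩
  have hp1q1 : p.1 ≠ q.1 := fun h => hpq (Subtype.ext h)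
  unfold secant2
  by_cases hpol : QuadraticMap.polar ⇑Q p.1.rep q.1.rep = 0
  · have hset : {x : Projectivization (ZMod 2) V |
        x.rep ∈ p.1.submodule ⊔ q.1.submodule ∧ Q x.rep = 0} =
        {p.1, q.1, Projectivization.mk (ZMod 2) (p.1.rep + q.1.rep) hsum0} := by
      ext x
      rw [Set.mem_setOf_eq, hmem x]
      simp only [Set.mem_insert_iff, Set.mem_singleton_iff]
      constructor
      · rintro (h | h | ⟨h, -⟩)
        · exact Or.inl h
        · exact Or.inr (Or.inl h)
        · exact Or.inr (Or.inr ((rep_eq_iff_zmod2 _ _).mpr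
            (by rw [h, rep_mk_zmod2])))
      · rintro (h | h | h)
        · exact Or.inl h
        · exact Or.inr (Or.inl h)
        · exact Or.inr (Or.inr ⟨by rw [h, rep_mk_zmod2], hpol⟩)
    rw [hset]
    have h2 : p.1 ≠ Projectivization.mk (ZMod 2) (p.1.rep + q.1.rep) hsum0 := by
      intro h
      have := (rep_eq_iff_zmod2 _ _).mp h
      rw [rep_mk_zmod2] at this
      have h4 : p.1.rep + p.1.rep = p.1.rep + (p.1.rep + q.1.rep) :=
        congrArg (p.1.rep + ·) this
      rw [add_self_zmod2, ← add_assoc, add_self_zmod2, zero_add] at h4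
      exact hw h4.symm
    have h3 : q.1 ≠ Projectivization.mk (ZMod 2) (p.1.rep + q.1.rep) hsum0 := by
      intro h
      have := (rep_eq_iff_zmod2 _ _).mp h
      rw [rep_mk_zmod2] at this
      have h4 : q.1.rep + q.1.rep = (p.1.rep + q.1.rep) + q.1.rep :=
        congrArg (· + q.1.rep) this
      rw [add_self_zmod2, add_assoc, add_self_zmod2, add_zero] at h4
      exact hu h4.symm
    have : ({p.1, q.1, Projectivization.mk (ZMod 2) (p.1.rep + q.1.rep) hsum0} :
        Set (Projectivization (ZMod 2) V)).ncard = 3 :=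
      Set.ncard_eq_three.mpr ⟨_, _, _, hp1q1, h2, h3, rfl⟩
    rw [this]
    simp [hpol]
  · have hset : {x : Projectivization (ZMod 2) V |
        x.rep ∈ p.1.submodule ⊔ q.1.submodule ∧ Q x.rep = 0} = {p.1, q.1} := by
      ext x
      rw [Set.mem_setOf_eq, hmem x]
      simp only [Set.mem_insert_iff, Set.mem_singleton_iff]
      tauto
    rw [hset, Set.ncard_pair hp1q1]
    simp [hpol]

end Aux


/- **Statement 16**: for `s = 0` (so `α` is the single point `P`), the map fixing `P` and all
type (iii) points and sending each type (ii) point `Q'` to the third point of the quadric on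
the line `PQ'` is a graph isomorphism `Γ ≅ Γ_0`.  (The image of a type (ii) vertex is pinned
down as the point of the line `PQ'` distinct from both `P` and `Q'`.) -/
theorem gamma0_isomorphic_pointGraph (n g : ℕ) (hg : 1 ≤ g)
    (Q : QuadraticForm (ZMod 2) (Fin (n + 1) → ZMod 2)) (hQ : quadricNonsingular Q)
    (hgi : projIndex Q g) (P : QuadricPoint Q) :
    ∃ φ : pointGraph Q ≃g gammaS Q P.1.submodule,
      (∀ v : QuadricPoint Q, ¬ typeII Q P.1.submodule v → φ v = v) ∧
      (∀ v : QuadricPoint Q, typeII Q P.1.submodule v →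
        (φ v).1.submodule ≤ P.1.submodule ⊔ v.1.submodule ∧ φ v ≠ v ∧ φ v ≠ P) := by
  classical
  set e := P.1.rep with he
  have hQe : Q e = 0 := P.2
  have he0 : e ≠ 0 := P.1.rep_nonzero
  set α := P.1.submodule with hα
  -- not in α iff not equal to P
  have hnotmem : ∀ v : QuadricPoint Q, v.1.rep ∉ α ↔ v ≠ P := by
    intro v
    rw [hα, Projectivization.submodule_eq, mem_span_singleton_zmod2]
    constructor
    · intro h hvP
      exact h (Or.inr (by rw [hvP]))
    · rintro h (h0 | h1)
      · exact v.1.rep_nonzero h0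
      · exact h ((qp_eq_iff Q v P).mpr h1)
  have htypeII : ∀ v : QuadricPoint Q,
      typeII Q α v ↔ (v ≠ P ∧ QuadraticMap.polar ⇑Q e v.1.rep = 0) := by
    intro v
    unfold typeII
    rw [hnotmem v]
    exact and_congr_right fun _ => line_ts_iff Q P v
  have htypeIII : ∀ v : QuadricPoint Q,
      typeIII Q α v ↔ (v ≠ P ∧ QuadraticMap.polar ⇑Q e v.1.rep ≠ 0) := by
    intro v
    unfold typeIII
    rw [hnotmem v]
    exact and_congr_right fun _ => not_congr (line_ts_iff Q P v)
  -- data for the swap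
  have hstep : ∀ v : QuadricPoint Q, typeII Q α v →
      (e + v.1.rep ≠ 0 ∧ Q (e + v.1.rep) = 0) := by
    intro v hv
    obtain ⟨hvP, hpol⟩ := (htypeII v).mp hv
    refine ⟨fun h0 => hvP ((qp_eq_iff Q v P).mpr ((add_eq_zero_iff_zmod2 _ _).mp h0).symm), ?_⟩
    rw [QuadraticMap.map_add ⇑Q, hQe, v.2, hpol]
    simp
  set f : QuadricPoint Q → QuadricPoint Q := fun v =>
    if h : typeII Q α v then
      ⟨Projectivization.mk (ZMod 2) (e + v.1.rep) (hstep v h).1,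
        by rw [rep_mk_zmod2]; exact (hstep v h).2⟩
    else v with hf
  have hfrep : ∀ v (h : typeII Q α v), (f v).1.rep = e + v.1.rep := by
    intro v h
    rw [hf]
    simp only [dif_pos h]
    exact rep_mk_zmod2 _ _
  have hfnot : ∀ v, ¬ typeII Q α v → f v = v := by
    intro v h
    rw [hf]
    simp only [dif_neg h]
  have hfP : f P = P := hfnot P (fun h => ((htypeII P).mp h).1 rfl)
  -- k-value is preserved
  have hk : ∀ v, QuadraticMap.polar ⇑Q e (f v).1.rep = QuadraticMap.polar ⇑Q e v.1.rep := by
    intro v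
    by_cases h : typeII Q α v
    · rw [hfrep v h, QuadraticMap.polar_add_right, polar_self_zmod2, zero_add]
    · rw [hfnot v h]
  -- f v ≠ P for v ≠ P
  have hfne : ∀ v : QuadricPoint Q, v ≠ P → f v ≠ P := by
    intro v hv hc
    by_cases h : typeII Q α v
    · have := (qp_eq_iff Q _ _).mp hc
      rw [hfrep v h] at this
      have h4 : e + e = e + (e + v.1.rep) := congrArg (e + ·) this.symm
      rw [add_self_zmod2, ← add_assoc, add_self_zmod2, zero_add] at h4
      exact v.1.rep_nonzero h4.symm
    · rw [hfnot v h] at hc; exact hv hc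
  have hIIf : ∀ v, typeII Q α (f v) ↔ typeII Q α v := by
    intro v
    rw [htypeII, htypeII, hk]
    constructor
    · rintro ⟨h1, h2⟩
      refine ⟨fun hvP => ?_, h2⟩
      rw [hvP, hfP] at h1; exact h1 rfl
    · rintro ⟨h1, h2⟩
      exact ⟨hfne v h1, h2⟩
  have hIIIf : ∀ v, typeIII Q α (f v) ↔ typeIII Q α v := by
    intro v
    rw [htypeIII, htypeIII, hk]
    constructor
    · rintro ⟨h1, h2⟩
      refine ⟨fun hvP => ?_, h2⟩
      rw [hvP, hfP] at h1; exact h1 rfl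
    · rintro ⟨h1, h2⟩
      exact ⟨hfne v h1, h2⟩
  have hinv : Function.Involutive f := by
    intro v
    by_cases h : typeII Q α v
    · have h2 : typeII Q α (f v) := (hIIf v).mpr h
      apply (qp_eq_iff Q _ _).mpr
      rw [hfrep _ h2, hfrep v h, ← add_assoc, add_self_zmod2, zero_add]
    · rw [hfnot v h, hfnot v h]
  have hmixf : ∀ a b, mixedPair Q α (f a) (f b) ↔ mixedPair Q α a b := by
    intro a b
    unfold mixedPair
    rw [hIIf, hIIf, hIIIf, hIIIf]
  have key : ∀ a b : QuadricPoint Q,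
      (gammaS Q α).Adj (f a) (f b) ↔ (pointGraph Q).Adj a b := by
    intro a b
    by_cases hab : a = b
    · subst hab
      simp [SimpleGraph.irrefl]
    have hfab : f a ≠ f b := fun h => hab (hinv.injective h)
    show (f a ≠ f b ∧ (mixedPair Q α (f a) (f b) → secant2 Q (f a) (f b)) ∧
        (¬ mixedPair Q α (f a) (f b) →
          totallySingular Q ((f a).1.submodule ⊔ (f b).1.submodule))) ↔
      (a ≠ b ∧ totallySingular Q (a.1.submodule ⊔ b.1.submodule))
    rw [hmixf a b, secant2_iff Q _ _ hfab, line_ts_iff Q (f a) (f b), line_ts_iff Q a b]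
    by_cases hmix : mixedPair Q α a b
    · -- mixed pair: edge complemented, but reps shift by e
      have hone : ∀ x y : ZMod 2, x ≠ 0 → (x + y ≠ 0 ↔ y = 0) := by decide
      rcases hmix with ⟨hIIa, hIIIb⟩ | ⟨hIIb, hIIIa⟩
      · have hkb := ((htypeIII b).mp hIIIb).2
        have hnb : ¬ typeII Q α b := fun h => hkb ((htypeII b).mp h).2
        have hPab : QuadraticMap.polar ⇑Q (f a).1.rep (f b).1.rep =
            QuadraticMap.polar ⇑Q e b.1.rep + QuadraticMap.polar ⇑Q a.1.rep b.1.rep := by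
          rw [hfrep a hIIa, hfnot b hnb, QuadraticMap.polar_add_left]
        rw [hPab]
        constructor
        · rintro ⟨-, h, -⟩
          exact ⟨hab, (hone _ _ hkb).mp (h (Or.inl ⟨hIIa, hIIIb⟩))⟩
        · rintro ⟨-, h⟩
          exact ⟨hfab, fun _ => (hone _ _ hkb).mpr h,
            fun hc => absurd (Or.inl ⟨hIIa, hIIIb⟩) hc⟩
      · have hka := ((htypeIII a).mp hIIIa).2
        have hna : ¬ typeII Q α a := fun h => hka ((htypeII a).mp h).2
        have hPab : QuadraticMap.polar ⇑Q (f a).1.rep (f b).1.rep =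
            QuadraticMap.polar ⇑Q e a.1.rep + QuadraticMap.polar ⇑Q a.1.rep b.1.rep := by
          rw [hfrep b hIIb, hfnot a hna, QuadraticMap.polar_add_right,
            QuadraticMap.polar_comm ⇑Q a.1.rep e]
        rw [hPab]
        constructor
        · rintro ⟨-, h, -⟩
          exact ⟨hab, (hone _ _ hka).mp (h (Or.inr ⟨hIIb, hIIIa⟩))⟩
        · rintro ⟨-, h⟩
          exact ⟨hfab, fun _ => (hone _ _ hka).mpr h,
            fun hc => absurd (Or.inr ⟨hIIb, hIIIa⟩) hc⟩
    · -- unmixed pair: reps shift cancels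
      have hPab : QuadraticMap.polar ⇑Q (f a).1.rep (f b).1.rep =
          QuadraticMap.polar ⇑Q a.1.rep b.1.rep := by
        by_cases hIIa : typeII Q α a <;> by_cases hIIb : typeII Q α b
        · have hka := ((htypeII a).mp hIIa).2
          have hkb := ((htypeII b).mp hIIb).2
          rw [hfrep a hIIa, hfrep b hIIb, QuadraticMap.polar_add_left,
            QuadraticMap.polar_add_right, QuadraticMap.polar_add_right,
            polar_self_zmod2, hkb, QuadraticMap.polar_comm ⇑Q a.1.rep e, hka]
          abel
        · -- a type II, b not type II: since unmixed, b is not type III either, so b = P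
          have hbP : b = P := by
            by_contra hbP
            rcases eq_or_ne (QuadraticMap.polar ⇑Q e b.1.rep) 0 with h0 | h0
            · exact hIIb ((htypeII b).mpr ⟨hbP, h0⟩)
            · exact hmix (Or.inl ⟨hIIa, (htypeIII b).mpr ⟨hbP, h0⟩⟩)
          rw [hfrep a hIIa, hbP, hfP, ← he, QuadraticMap.polar_add_left,
            polar_self_zmod2, zero_add]
        · have haP : a = P := by
            by_contra haP
            rcases eq_or_ne (QuadraticMap.polar ⇑Q e a.1.rep) 0 with h0 | h0
            · exact hIIa ((htypeII a).mpr ⟨haP, h0⟩)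
            · exact hmix (Or.inr ⟨hIIb, (htypeIII a).mpr ⟨haP, h0⟩⟩)
          rw [hfrep b hIIb, haP, hfP, ← he, QuadraticMap.polar_add_right,
            polar_self_zmod2, zero_add]
        · rw [hfnot a hIIa, hfnot b hIIb]
      rw [hPab]
      constructor
      · rintro ⟨-, -, h⟩
        exact ⟨hab, h hmix⟩
      · rintro ⟨-, h⟩
        exact ⟨hfab, fun hc => absurd hc hmix, fun _ => h⟩
  refine ⟨⟨hinv.toPerm, fun {a b} => key a b⟩, fun v hv => hfnot v hv, fun v hv => ?_⟩
  show (f v).1.submodule ≤ α ⊔ v.1.submodule ∧ f v ≠ v ∧ f v ≠ P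
  have hrep : (f v).1.rep = e + v.1.rep := hfrep v hv
  refine ⟨?_, ?_, ?_⟩
  · rw [Projectivization.submodule_eq, hrep, hα, line_sub Q P v, Submodule.span_le,
      Set.singleton_subset_iff]
    exact mem_span_pair_zmod2.mpr (Or.inr (Or.inr (Or.inr rfl)))
  · intro hc
    have h1 := (qp_eq_iff Q _ _).mp hc
    rw [hrep] at h1
    have h4 : v.1.rep + v.1.rep = (e + v.1.rep) + v.1.rep := congrArg (· + v.1.rep) h1.symm
    rw [add_self_zmod2, add_assoc, add_self_zmod2, add_zero] at h4
    exact he0 h4.symm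
  · exact hfne v ((htypeII v).mp hv).1
end

section
/- Let Q be a non-singular quadric in PG(n,2) with n even (so Q = P_n is parabolic with nucleus N), let α be an s-space contained in Q, and let R be a point of Q with ⟨α,R⟩ not contained in Q. Then the (s+1)-space ⟨α,R⟩ does not contain the nucleus N. -/
lemma zmod2_cases (c : ZMod 2) : c = 0 ∨ c = 1 := by
  revert c; decide

/- **Statement 19**: for a non-singular parabolic quadric in `PG(n,2)` (`n` even) with
nucleus `ν` (a point off the quadric lying on every tangent hyperplane), if `α` is an
`s`-space contained in the quadric and `x` a point of the quadric with `⟨α, x⟩` not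
contained in the quadric, then the `(s+1)`-space `⟨α, x⟩` does not contain the nucleus. -/
theorem nucleus_not_in_span (n s : ℕ) (hn : Even n)
    (Q : QuadraticForm (ZMod 2) (Fin (n + 1) → ZMod 2)) (hQ : quadricNonsingular Q)
    (ν : Fin (n + 1) → ZMod 2) (hν0 : ν ≠ 0) (hνQ : Q ν ≠ 0)
    (hν : ∀ p : Fin (n + 1) → ZMod 2, p ≠ 0 → Q p = 0 → QuadraticMap.polar ⇑Q p ν = 0)
    (α : Submodule (ZMod 2) (Fin (n + 1) → ZMod 2)) (hα : totallySingular Q α)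
    (hαd : Module.finrank (ZMod 2) ↥α = s + 1)
    (x : Fin (n + 1) → ZMod 2) (hx0 : x ≠ 0) (hxQ : Q x = 0) (hxα : x ∉ α)
    (hnotts : ¬ totallySingular Q (α ⊔ Submodule.span (ZMod 2) {x})) :
    ν ∉ α ⊔ Submodule.span (ZMod 2) {x} := by
  intro hmem
  -- find a' ∈ α with polar Q a' x ≠ 0
  simp only [totallySingular, not_forall] at hnotts
  obtain ⟨v, hv, hvQ⟩ := hnotts
  rw [Submodule.mem_sup] at hv hmem
  obtain ⟨a', ha', w, hw, rfl⟩ := hv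
  rw [Submodule.mem_span_singleton] at hw
  obtain ⟨c, rfl⟩ := hw
  have hc := zmod2_cases c
  rcases hc with rfl | rfl
  · simp [hα a' ha'] at hvQ
  rw [one_smul] at hvQ
  have hpol : QuadraticMap.polar ⇑Q a' x ≠ 0 := by
    have hdef : QuadraticMap.polar ⇑Q a' x = Q (a' + x) - Q a' - Q x := rfl
    rw [hdef, hα a' ha', hxQ]
    simpa using hvQ
  obtain ⟨a, ha, w, hw, hne⟩ := hmem
  rw [Submodule.mem_span_singleton] at hw
  obtain ⟨c, rfl⟩ := hw
  have hc := zmod2_cases c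
  rcases hc with rfl | rfl
  · apply hνQ
    rw [← hne]
    simpa using hα a ha
  rw [one_smul] at hne
  -- ν = a + x
  have ha'0 : a' ≠ 0 := by
    rintro rfl
    simp [QuadraticMap.polar] at hpol
  have := hν a' ha'0 (hα a' ha')
  rw [← hne] at this
  rw [QuadraticMap.polar_add_right] at this
  have haa : QuadraticMap.polar ⇑Q a' a = 0 := by
    have h1 := hα _ (α.add_mem ha' ha)
    have : QuadraticMap.polar ⇑Q a' a = Q (a' + a) - Q a' - Q a := rfl
    rw [this, h1, hα a' ha', hα a ha]; ring
  rw [haa, zero_add] at this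
  exact hpol this
end
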